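/- For random lifetimes X and Y and positive constants a, b, the cumulative hazard of aX+b is H_{aX+b}(t) = H_X((t-b)/a), and X ≤_GT Y holds if and only if aX+b ≤_GT aY+b. -/

import Mathlib

open MeasureTheory intervalIntegral

noncomputable def GTindex (H : ℝ → ℝ) (t : ℝ) : ℝ :=
  1 - 2 / (t * H t) * ∫ u in (0:ℝ)..t, H u

/-- For `a, b > 0`: the cumulative hazard of `aX+b` is `H_X((t-b)/a)` for `t > b`, and
`X ≤_GT Y` iff `aX+b ≤_GT aY+b` (the latter compared on the transformed common domain). -/
theorem stmt9 {Ω : Type*} [MeasurableSpace Ω] (ℙ : Measure Ω) [IsProbabilityMeasure ℙ]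
    (X Y : Ω → ℝ) (hX : ∀ ω, 0 ≤ X ω) (hY : ∀ ω, 0 ≤ Y ω)
    (a b : ℝ) (ha : 0 < a) (hb : 0 < b)
    (HX HY HaXb HaYb : ℝ → ℝ)
    (hHX : ∀ t, HX t = -Real.log (ℙ {ω | X ω > t}).toReal)
    (hHY : ∀ t, HY t = -Real.log (ℙ {ω | Y ω > t}).toReal)
    (hHaXb : ∀ t, HaXb t = -Real.log (ℙ {ω | a * X ω + b > t}).toReal)
    (hHaYb : ∀ t, HaYb t = -Real.log (ℙ {ω | a * Y ω + b > t}).toReal)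
    (D : Set ℝ) :
    (∀ t, b < t → HaXb t = HX ((t - b) / a)) ∧
    ((∀ t ∈ D, GTindex HX t ≤ GTindex HY t) ↔
      (∀ t ∈ D, GTindex HaXb (a * t + b) ≤ GTindex HaYb (a * t + b))) := by
  -- transformed hazards, valid for ALL t
  have hHaXbX : ∀ t, HaXb t = HX ((t - b) / a) := by
    intro t
    have hset : {ω | a * X ω + b > t} = {ω | X ω > (t - b) / a} := by
      ext ω
      simp only [Set.mem_setOf_eq, gt_iff_lt, div_lt_iff₀ ha]
      constructor <;> intro h <;> nlinarith
    rw [hHaXb, hset, hHX]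
  have hHaYbY : ∀ t, HaYb t = HY ((t - b) / a) := by
    intro t
    have hset : {ω | a * Y ω + b > t} = {ω | Y ω > (t - b) / a} := by
      ext ω
      simp only [Set.mem_setOf_eq, gt_iff_lt, div_lt_iff₀ ha]
      constructor <;> intro h <;> nlinarith
    rw [hHaYb, hset, hHY]
  -- hazards vanish on negatives
  have hXneg : ∀ s, s < 0 → HX s = 0 := by
    intro s hs
    have : {ω | X ω > s} = Set.univ := by
      ext ω; simp only [Set.mem_setOf_eq, Set.mem_univ, iff_true, gt_iff_lt]
      exact lt_of_lt_of_le hs (hX ω)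
    rw [hHX, this, measure_univ, ENNReal.toReal_one, Real.log_one, neg_zero]
  have hYneg : ∀ s, s < 0 → HY s = 0 := by
    intro s hs
    have : {ω | Y ω > s} = Set.univ := by
      ext ω; simp only [Set.mem_setOf_eq, Set.mem_univ, iff_true, gt_iff_lt]
      exact lt_of_lt_of_le hs (hY ω)
    rw [hHY, this, measure_univ, ENNReal.toReal_one, Real.log_one, neg_zero]
  -- a.e. every real is nonzero
  have h0ae : ∀ᵐ x ∂(volume : Measure ℝ), x ≠ (0:ℝ) := by
    have : (volume : Measure ℝ) {(0:ℝ)} = 0 := Real.volume_singleton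
    rw [Filter.eventually_iff, mem_ae_iff]
    convert this using 2
    ext x; simp
  -- the shift lemma for integrals of hazards vanishing on negatives
  have hshift : ∀ (H : ℝ → ℝ), (∀ s, s < 0 → H s = 0) →
      ∀ t, (∫ x in (-(b/a))..t, H x) = ∫ x in (0:ℝ)..t, H x := by
    intro H hneg
    set c : ℝ := -(b/a) with hc_def
    have hc : c < 0 := by
      rw [hc_def]; simp only [neg_neg, Left.neg_neg_iff]; positivity
    have hae : ∀ p q : ℝ, p ≤ 0 → q ≤ 0 → (∫ x in p..q, H x) = 0 := by
      intro p q hp hq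
      have h1 : ∀ᵐ x ∂(volume : Measure ℝ), x ∈ Set.uIoc p q → H x = (0:ℝ) := by
        filter_upwards [h0ae] with x hx hmem
        have hle : x ≤ max p q := (Set.mem_uIoc.mp hmem).elim (fun h => le_max_of_le_right h.2)
          (fun h => le_max_of_le_left h.2)
        exact hneg x (lt_of_le_of_ne (hle.trans (max_le hp hq)) hx)
      rw [intervalIntegral.integral_congr_ae h1, intervalIntegral.integral_zero]
    have hic : IntervalIntegrable H volume c 0 := by
      rw [intervalIntegrable_iff]
      apply (integrable_zero _ _ _).congr
      filter_upwards [ae_restrict_of_ae h0ae, ae_restrict_mem measurableSet_uIoc] with x hx hmem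
      have hle : x ≤ max c 0 := (Set.mem_uIoc.mp hmem).elim (fun h => le_max_of_le_right h.2)
        (fun h => le_max_of_le_left h.2)
      exact (hneg x (lt_of_le_of_ne (hle.trans (max_le hc.le le_rfl)) hx)).symm
    intro t
    rcases le_or_gt t 0 with ht | ht
    · rw [hae c t hc.le ht, hae 0 t le_rfl ht]
    · by_cases hint : IntervalIntegrable H volume 0 t
      · rw [← intervalIntegral.integral_add_adjacent_intervals hic hint,
          hae c 0 hc.le le_rfl, zero_add]
      · have hnot : ¬ IntervalIntegrable H volume c t := by
          intro h
          exact hint (h.mono_set (Set.uIcc_subset_uIcc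
            (Set.mem_uIcc.mpr (Or.inl ⟨hc.le, ht.le⟩))
            (Set.mem_uIcc.mpr (Or.inl ⟨hc.le.trans ht.le, le_rfl⟩))))
        rw [intervalIntegral.integral_undef hnot, intervalIntegral.integral_undef hint]
  -- integral of transformed hazard
  have hintgen : ∀ (H Hab : ℝ → ℝ), (∀ s, s < 0 → H s = 0) →
      (∀ s, Hab s = H ((s - b) / a)) →
      ∀ t, (∫ u in (0:ℝ)..(a * t + b), Hab u) = a * ∫ u in (0:ℝ)..t, H u := by
    intro H Hab hneg hab t
    have e1 : ∀ u : ℝ, Hab u = H (a⁻¹ * u + -(b/a)) := by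
      intro u; rw [hab]; congr 1; field_simp; ring
    calc (∫ u in (0:ℝ)..(a * t + b), Hab u)
        = ∫ u in (0:ℝ)..(a * t + b), H (a⁻¹ * u + -(b/a)) := by
          simp only [e1]
      _ = (a⁻¹)⁻¹ • ∫ x in (a⁻¹ * 0 + -(b/a))..(a⁻¹ * (a * t + b) + -(b/a)), H x :=
          intervalIntegral.integral_comp_mul_add H (inv_ne_zero ha.ne') _
      _ = a * ∫ u in (0:ℝ)..t, H u := by
          rw [inv_inv, smul_eq_mul]
          congr 1
          have e2 : a⁻¹ * 0 + -(b/a) = -(b/a) := by ring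
          have e3 : a⁻¹ * (a * t + b) + -(b/a) = t := by field_simp; ring
          rw [e2, e3, hshift H hneg t]
  -- GT index of transformed lifetime
  have hGT : ∀ (H Hab : ℝ → ℝ), (∀ s, s < 0 → H s = 0) →
      (∀ s, Hab s = H ((s - b) / a)) →
      ∀ t, GTindex Hab (a * t + b) =
        1 - (a * t / (a * t + b)) * (2 / (t * H t) * ∫ u in (0:ℝ)..t, H u) := by
    intro H Hab hneg hab t
    have e3 : (a * t + b - b) / a = t := by field_simp; ring
    unfold GTindex
    rw [hintgen H Hab hneg hab t, hab, e3]
    rcases lt_trichotomy t 0 with ht | ht | ht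
    · rw [hneg t ht]; simp
    · subst ht; simp
    · by_cases hH : H t = 0
      · simp [hH]
      · have hs : a * t + b ≠ 0 := by positivity
        have ht' : t ≠ 0 := ht.ne'
        field_simp
  -- pointwise equivalence
  have key : ∀ t, (GTindex HX t ≤ GTindex HY t ↔
      GTindex HaXb (a * t + b) ≤ GTindex HaYb (a * t + b)) := by
    intro t
    rw [hGT HX HaXb hXneg hHaXbX t, hGT HY HaYb hYneg hHaYbY t]
    show GTindex HX t ≤ GTindex HY t ↔ _
    unfold GTindex
    rcases lt_trichotomy t 0 with ht | ht | ht
    · rw [hXneg t ht, hYneg t ht]; simp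
    · subst ht; simp
    · have hr : 0 < a * t / (a * t + b) := by positivity
      constructor <;> intro h <;> nlinarith
  refine ⟨fun t _ => hHaXbX t, ?_⟩
  constructor <;> intro h t ht
  · exact (key t).1 (h t ht)
  · exact (key t).2 (h t ht)
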